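/- For all integers n ≥ 0, m ≥ 0, s ≥ 1 and every prime p ≥ 3, the modified Lah polynomials satisfy P_{n+m·p^s}(x) ≡ (x^{p^s} + 1)^m · P_n(x) modulo p in (ℤ/pℤ)[x]. -/

import Mathlib

open Polynomial Finset

/-- The Lah number `L(n,k) = C(n-1,k-1)·n!/k!`, with `L(0,0) = 1` and `L(n,0) = 0` for `n > 0`. -/
def lah (n k : ℕ) : ℕ :=
  if k = 0 then (if n = 0 then 1 else 0)
  else (n - 1).choose (k - 1) * n.factorial / k.factorial

/-- `L_n`, the total number of partitions of an n-set into nonempty ordered lists. -/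
def lahTotal (n : ℕ) : ℕ := ∑ k ∈ Finset.range (n + 1), lah n k

/-- The modified Lah polynomial `P_n(x) = ∑_{k=0}^n C(n,k)·L_k·x^{n-k}`. -/
noncomputable def modLahPoly (n : ℕ) : Polynomial ℤ :=
  ∑ k ∈ Finset.range (n + 1), ((n.choose k * lahTotal k : ℤ)) • X ^ (n - k)

lemma lah_succ_succ (a k : ℕ) :
    lah (a+1) (k+1) = a.choose k * (a+1).factorial / (k+1).factorial := by
  simp [lah]

lemma lah_cast (a k : ℕ) (h : k ≤ a) :
    (lah (a+1) (k+1) : ℚ) = (a+1).choose (k+1) * a.factorial / k.factorial := by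
  have key : a.choose k * (a+1).factorial = (a+1).choose (k+1) * (k+1) * a.factorial := by
    rw [Nat.factorial_succ, ← Nat.add_one_mul_choose_eq]; ring
  have hdvd : (k+1).factorial ∣ a.choose k * (a+1).factorial := by
    rw [key, Nat.factorial_succ, mul_comm ((a+1).choose (k+1)) (k+1), mul_assoc]
    exact Nat.mul_dvd_mul_left _ ((Nat.factorial_dvd_factorial h).mul_left _)
  rw [lah_succ_succ, Nat.cast_div hdvd (by exact_mod_cast (Nat.factorial_pos (k+1)).ne')]
  rw [key]
  push_cast [Nat.factorial_succ k]
  have hk : ((k:ℚ)+1) ≠ 0 := by positivity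
  have hkf : ((k.factorial : ℚ)) ≠ 0 := by exact_mod_cast (Nat.factorial_pos k).ne'
  field_simp

lemma sum_choose_hockey (m t : ℕ) : ∑ j ∈ range m, j.choose t = m.choose (t+1) := by
  induction m with
  | zero => simp
  | succ m ih => rw [Finset.sum_range_succ, ih, Nat.choose_succ_succ']; omega

lemma lemB (n t : ℕ) : ∑ j ∈ range n, (n - j) * j.choose t = (n+1).choose (t+2) := by
  induction n with
  | zero => simp [Nat.choose_eq_zero_of_lt]
  | succ n ih =>
    have : ∀ j ∈ range (n+1), (n + 1 - j) * j.choose t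
        = (n - j) * j.choose t + j.choose t := by
      intro j hj
      have : j ≤ n := by simpa [Nat.lt_succ_iff] using hj
      have h2 : n + 1 - j = (n - j) + 1 := by omega
      rw [h2]; ring
    rw [Finset.sum_congr rfl this, Finset.sum_add_distrib, Finset.sum_range_succ,
      Nat.sub_self, zero_mul, add_zero, ih, sum_choose_hockey,
      Nat.choose_succ_succ (n+1) (t+1), Nat.succ_eq_add_one, show t+1+1 = t+2 from rfl]
    omega

lemma lemB' (n t : ℕ) : ∑ i ∈ range n, (i+1) * (n-1-i).choose t = (n+1).choose (t+2) := by
  rw [← lemB n t, ← Finset.sum_range_reflect (fun j => (n - j) * j.choose t) n]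
  refine Finset.sum_congr rfl fun i hi => ?_
  have hi' : i < n := Finset.mem_range.1 hi
  have : n - (n - 1 - i) = i + 1 := by omega
  rw [this]

lemma stepC (n k : ℕ) :
    (lah (n+1) (k+1) : ℚ) = ∑ i ∈ range (n+1),
      (n.choose i : ℚ) * (i+1).factorial * (if k ≤ n - i then (lah (n-i) k : ℚ) else 0) := by
  rcases Nat.eq_zero_or_pos k with rfl | hk
  · rw [Finset.sum_eq_single n]
    · simp [lah, Nat.sub_self]
    · intro i hi hne
      have hi' : i < n := by have := Finset.mem_range.1 hi; omega
      have : lah (n - i) 0 = 0 := by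
        simp [lah]; omega
      simp [this]
    · intro h; exact absurd (Finset.self_mem_range_succ n) h
  rcases lt_or_ge n k with hnk | hkn
  · have h1 : lah (n+1) (k+1) = 0 := by
      simp [lah, Nat.choose_eq_zero_of_lt hnk]
    rw [h1]
    rw [eq_comm]
    push_cast
    refine Finset.sum_eq_zero fun i hi => ?_
    rw [if_neg (by omega), mul_zero]
  · rw [Finset.sum_range_succ, if_neg (by omega), mul_zero, add_zero]
    have hterm : ∀ i ∈ range n,
        (n.choose i : ℚ) * (i+1).factorial * (if k ≤ n - i then (lah (n-i) k : ℚ) else 0)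
        = (n.factorial : ℚ) / k.factorial * (((i+1) * (n-1-i).choose (k-1) : ℕ) : ℚ) := by
      intro i hi
      have hi' : i < n := Finset.mem_range.1 hi
      by_cases hg : k ≤ n - i
      · rw [if_pos hg]
        obtain ⟨t, rfl⟩ : ∃ t, k = t + 1 := ⟨k-1, by omega⟩
        obtain ⟨b, hb⟩ : ∃ b, n - i = b + 1 := ⟨n-i-1, by omega⟩
        have htb : t ≤ b := by omega
        have h1 : n - 1 - i = b := by omega
        have hn : n = i + (b + 1) := by omega
        rw [hb, lah_cast b t htb, h1, show t+1-1 = t from rfl]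
        subst hn
        push_cast
        rw [Nat.cast_choose ℚ (show i ≤ i + (b + 1) by omega),
            Nat.cast_choose ℚ (show t+1 ≤ b+1 by omega),
            Nat.cast_choose ℚ htb]
        have e1 : i + (b + 1) - i = b + 1 := by omega
        have e2 : b + 1 - (t+1) = b - t := by omega
        rw [e1, e2]
        have f0 : ∀ m : ℕ, (m.factorial : ℚ) ≠ 0 :=
          fun m => Nat.cast_ne_zero.2 (Nat.factorial_ne_zero m)
        have f1 := f0 i; have f2 := f0 (b+1); have f3 := f0 (t+1)
        have f4 := f0 (b-t); have f5 := f0 t; have f6 := f0 b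
        rw [Nat.factorial_succ i, Nat.factorial_succ b, Nat.factorial_succ t]
        push_cast [Nat.factorial_succ] at *
        field_simp
      · rw [if_neg hg, Nat.choose_eq_zero_of_lt (show n - 1 - i < k - 1 by omega)]
        push_cast
        ring
    rw [Finset.sum_congr rfl hterm, ← Finset.mul_sum, ← Nat.cast_sum, lemB' n (k-1),
        show k - 1 + 2 = k + 1 by omega]
    obtain ⟨t, rfl⟩ : ∃ t, k = t + 1 := ⟨k-1, by omega⟩
    rw [lah_cast n (t+1) hkn]
    ring

lemma lahTotal_rec (n : ℕ) :
    lahTotal (n+1) = ∑ i ∈ range (n+1), n.choose i * (i+1).factorial * lahTotal (n-i) := by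
  have hq : (lahTotal (n+1) : ℚ)
      = ∑ i ∈ range (n+1), (n.choose i : ℚ) * (i+1).factorial * (lahTotal (n-i) : ℚ) := by
    have h0 : (lahTotal (n+1) : ℚ) = ∑ k ∈ range (n+2), (lah (n+1) k : ℚ) := by
      rw [lahTotal]; push_cast; rfl
    rw [h0, Finset.sum_range_succ']
    have hz : (lah (n+1) 0 : ℚ) = 0 := by simp [lah]
    rw [hz, add_zero]
    have : ∀ k ∈ range (n+1), (lah (n+1) (k+1) : ℚ) = ∑ i ∈ range (n+1),
        (n.choose i : ℚ) * (i+1).factorial * (if k ≤ n - i then (lah (n-i) k : ℚ) else 0) :=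
      fun k _ => stepC n k
    rw [Finset.sum_congr rfl this, Finset.sum_comm]
    refine Finset.sum_congr rfl fun i hi => ?_
    rw [← Finset.mul_sum]
    congr 1
    have hsub : range (n - i + 1) ⊆ range (n + 1) :=
      Finset.range_subset_range.2 (by omega)
    rw [← Finset.sum_subset hsub, lahTotal]
    · push_cast
      refine Finset.sum_congr rfl fun k hk => ?_
      rw [if_pos (by have := Finset.mem_range.1 hk; omega)]
    · intro k hk hk2
      rw [if_neg (by have := Finset.mem_range.1 hk; simp [Finset.mem_range] at hk2; omega)]
  exact_mod_cast hq

lemma lucas_split {p : ℕ} (hp : p.Prime) (s a k : ℕ) :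
    ((a + p^s).choose k : ZMod p) =
      (a.choose k : ZMod p) + (if p^s ≤ k then (a.choose (k - p^s) : ZMod p) else 0) := by
  haveI : Fact p.Prime := ⟨hp⟩
  have h1 : ((X + 1 : (ZMod p)[X]) ^ (a + p^s)).coeff k = ((a + p^s).choose k : ZMod p) :=
    Polynomial.coeff_X_add_one_pow _ _ _
  have h2 : (X + 1 : (ZMod p)[X]) ^ (a + p^s) = (X+1)^a * X^(p^s) + (X+1)^a := by
    rw [pow_add, add_pow_char_pow, one_pow, mul_add, mul_one]
  rw [h2] at h1
  rw [← h1, Polynomial.coeff_add, Polynomial.coeff_mul_X_pow',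
    Polynomial.coeff_X_add_one_pow]
  rw [add_comm]
  congr 1
  rw [Polynomial.coeff_X_add_one_pow]

lemma lahTotal_p {p : ℕ} (hp : p.Prime) : (lahTotal p : ZMod p) = 1 := by
  have h0 : (lahTotal p : ZMod p) = ∑ k ∈ range (p+1), ((lah p k : ℕ) : ZMod p) := by
    rw [lahTotal]; push_cast; rfl
  rw [h0, Finset.sum_eq_single p]
  · have : lah p p = 1 := by
      simp [lah, hp.ne_zero, Nat.choose_self, Nat.div_self (Nat.factorial_pos p)]
    rw [this, Nat.cast_one]
  · intro k hk hne
    have hk' : k < p := by have := Finset.mem_range.1 hk; omega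
    rcases Nat.eq_zero_or_pos k with rfl | hk1
    · simp [lah, hp.ne_zero]
    · have hdvd : p ∣ lah p k := by
        have hfd : k.factorial ∣ (p-1).factorial :=
          Nat.factorial_dvd_factorial (by omega)
        have hpf : p.factorial = p * (p-1).factorial := by
          conv_lhs => rw [show p = p - 1 + 1 by omega]
          rw [Nat.factorial_succ]
          congr 1
          omega
        have hfact : p.factorial / k.factorial = p * ((p-1).factorial / k.factorial) := by
          rw [← Nat.mul_div_assoc p hfd, hpf]
        have : lah p k = (p-1).choose (k-1) * (p.factorial / k.factorial) := by
          rw [lah, if_neg (by omega), Nat.mul_div_assoc _ (Nat.factorial_dvd_factorial (by omega))]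
        rw [this, hfact]
        exact Dvd.dvd.mul_left (Dvd.intro _ rfl) _
      exact (ZMod.natCast_eq_zero_iff _ _).2 hdvd
  · intro h; exact absurd (Finset.self_mem_range_succ p) h

lemma lahTotal_add_p {p : ℕ} (hp : p.Prime) : ∀ n, (lahTotal (n + p) : ZMod p) = lahTotal n := by
  intro n
  induction n using Nat.strong_induction_on with
  | _ n ih =>
    match n with
    | 0 => rw [zero_add, lahTotal_p hp]; norm_num [lahTotal, lah]
    | Nat.succ m =>
      have hrw : m + 1 + p = (m + p) + 1 := by omega
      rw [hrw, lahTotal_rec (m+p), lahTotal_rec m]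
      push_cast
      have hext : (∑ i ∈ range (m+1), ((m.choose i : ZMod p) * ((i+1).factorial : ZMod p)
            * (lahTotal (m-i) : ZMod p)))
          = ∑ i ∈ range (m+p+1), ((m.choose i : ZMod p) * ((i+1).factorial : ZMod p)
            * (lahTotal (m-i) : ZMod p)) := by
        refine Finset.sum_subset (Finset.range_subset_range.2 (by omega)) ?_
        intro i hi hi2
        have : m.choose i = 0 :=
          Nat.choose_eq_zero_of_lt (by simp [Finset.mem_range] at hi2; omega)
        rw [this, Nat.cast_zero, zero_mul, zero_mul]
      rw [hext]
      refine Finset.sum_congr rfl fun i hi => ?_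
      rcases le_or_gt p (i+1) with hpi | hpi
      · have hf : (((i+1).factorial : ℕ) : ZMod p) = 0 :=
          (ZMod.natCast_eq_zero_iff _ _).2 (Nat.dvd_factorial hp.pos hpi)
        rw [hf, mul_zero, zero_mul, mul_zero, zero_mul]
      · have hc : (((m+p).choose i : ℕ) : ZMod p) = (m.choose i : ZMod p) := by
          have := lucas_split hp 1 m i
          rw [pow_one] at this
          rw [this, if_neg (by omega), add_zero]
        rw [hc]
        rcases le_or_gt i m with him | him
        · have : m + p - i = (m - i) + p := by omega
          rw [this, ih (m-i) (by omega)]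
        · rw [Nat.choose_eq_zero_of_lt him]; simp

lemma lahTotal_add_pow {p : ℕ} (hp : p.Prime) (s : ℕ) (hs : 1 ≤ s) (n : ℕ) :
    (lahTotal (n + p^s) : ZMod p) = lahTotal n := by
  obtain ⟨t, rfl⟩ : ∃ t, s = t + 1 := ⟨s-1, by omega⟩
  have h : p ^ (t+1) = p ^ t * p := pow_succ p t
  rw [h]
  induction (p ^ t) with
  | zero => simp
  | succ j ihj =>
    have : n + (j+1) * p = (n + j * p) + p := by ring
    rw [this, lahTotal_add_p hp, ihj]

lemma map_modLahPoly (p M : ℕ) :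
    (modLahPoly M).map (Int.castRingHom (ZMod p)) =
      ∑ k ∈ range (M+1), C ((M.choose k : ZMod p) * (lahTotal k : ZMod p)) * X ^ (M - k) := by
  rw [modLahPoly, Polynomial.map_sum]
  refine Finset.sum_congr rfl fun k _ => ?_
  rw [smul_eq_C_mul, Polynomial.map_mul, Polynomial.map_C, Polynomial.map_pow, Polynomial.map_X]
  simp

lemma stepG {p : ℕ} (hp : p.Prime) (s : ℕ) (hs : 1 ≤ s) (n : ℕ) :
    (modLahPoly (n + p^s)).map (Int.castRingHom (ZMod p)) =
      (X ^ (p^s) + 1) * (modLahPoly n).map (Int.castRingHom (ZMod p)) := by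
  set q := p ^ s with hq
  rw [map_modLahPoly, map_modLahPoly]
  have hsplit : ∀ k ∈ range (n + q + 1),
      C (((n+q).choose k : ZMod p) * (lahTotal k : ZMod p)) * X ^ (n + q - k)
      = C ((n.choose k : ZMod p) * (lahTotal k : ZMod p)) * X ^ (n + q - k)
        + (if q ≤ k then C ((n.choose (k-q) : ZMod p) * (lahTotal k : ZMod p)) * X ^ (n + q - k)
           else 0) := by
    intro k _
    rw [lucas_split hp s n k, add_mul, map_add, add_mul]
    congr 1
    split_ifs with h
    · rfl
    · rw [zero_mul, map_zero, zero_mul]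
  rw [Finset.sum_congr rfl hsplit, Finset.sum_add_distrib]
  have hsum1 : (∑ k ∈ range (n + q + 1),
      C ((n.choose k : ZMod p) * (lahTotal k : ZMod p)) * X ^ (n + q - k))
      = X ^ q * ∑ k ∈ range (n+1), C ((n.choose k : ZMod p) * (lahTotal k : ZMod p)) * X ^ (n - k) := by
    rw [← Finset.sum_subset (Finset.range_subset_range.2 (show n + 1 ≤ n + q + 1 by omega))]
    · rw [Finset.mul_sum]
      refine Finset.sum_congr rfl fun k hk => ?_
      have hk' : k ≤ n := by have := Finset.mem_range.1 hk; omega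
      have : n + q - k = q + (n - k) := by omega
      rw [this, pow_add]
      ring
    · intro k hk hk2
      have : n.choose k = 0 := by
        refine Nat.choose_eq_zero_of_lt ?_
        simp [Finset.mem_range] at hk2 ⊢
        omega
      rw [this, Nat.cast_zero, zero_mul, map_zero, zero_mul]
  have hsum2 : (∑ k ∈ range (n + q + 1),
      (if q ≤ k then C ((n.choose (k-q) : ZMod p) * (lahTotal k : ZMod p)) * X ^ (n + q - k) else 0))
      = ∑ k ∈ range (n+1), C ((n.choose k : ZMod p) * (lahTotal k : ZMod p)) * X ^ (n - k) := by
    have hre : n + q + 1 = q + (n + 1) := by omega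
    rw [hre, Finset.sum_range_add]
    have hz : (∑ k ∈ range q, (if q ≤ k then
        C ((n.choose (k-q) : ZMod p) * (lahTotal k : ZMod p)) * X ^ (n + q - k) else 0)) = 0 := by
      refine Finset.sum_eq_zero fun k hk => ?_
      rw [if_neg (by have := Finset.mem_range.1 hk; omega)]
    rw [hz, zero_add]
    refine Finset.sum_congr rfl fun j hj => ?_
    rw [if_pos (by omega)]
    have h1 : q + j - q = j := by omega
    have h2 : n + q - (q + j) = n - j := by omega
    have h3 : ((lahTotal (q + j) : ℕ) : ZMod p) = (lahTotal j : ZMod p) := by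
      rw [add_comm q j, lahTotal_add_pow hp s hs j]
    rw [h1, h2, h3]
  rw [hsum1, hsum2]
  ring

theorem modLahPoly_congr (n m s : ℕ) (hs : 1 ≤ s) (p : ℕ) (hp : p.Prime) (hp3 : 3 ≤ p) :
    (modLahPoly (n + m * p ^ s)).map (Int.castRingHom (ZMod p)) =
      (X ^ (p ^ s) + 1) ^ m * (modLahPoly n).map (Int.castRingHom (ZMod p)) := by
  induction m with
  | zero => simp
  | succ m ih =>
    have h : n + (m+1) * p ^ s = (n + m * p ^ s) + p ^ s := by ring
    rw [h, stepG hp s hs, ih, pow_succ]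
    ring
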